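/- For every integer g ≥ 2, the factorial (2g+2)! divides the order of the symplectic group Sp(2g, F₂) (i.e., (2g+2)! divides Nat.card of Matrix.symplecticGroup (Fin g) (ZMod 2)). -/

import Mathlib

open Matrix Equiv Finset

namespace Stmt10

/-- Indicator columns: `inl i` is the interval `[0, 2i+1]`, `inr i` is the pair
`{2i+1, 2i+2}`.  These are even-weight vectors in `F₂^(2g+2)` forming a symplectic
basis (for the standard form `J`) of the quotient of the sum-zero subspace of
`F₂^(2g+2)` by the all-ones vector, with respect to the form induced by
`B(x,y) = ∑_{i<j} x_i y_j`. -/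
def a (g : ℕ) : Fin g ⊕ Fin g → ℕ → ZMod 2
  | Sum.inl i => fun m => if m ≤ 2 * i.val + 1 then 1 else 0
  | Sum.inr i => fun m => if m = 2 * i.val + 1 ∨ m = 2 * i.val + 2 then 1 else 0

/-- The (2g+2) × (2g) matrix whose columns are the basis vectors. -/
def al (g : ℕ) : Matrix (Fin (2*g+2)) (Fin g ⊕ Fin g) (ZMod 2) :=
  Matrix.of fun m j => a g j m.val

/-- Permutation matrix of `σ`. -/
def P (g : ℕ) (σ : Equiv.Perm (Fin (2*g+2))) :
    Matrix (Fin (2*g+2)) (Fin (2*g+2)) (ZMod 2) :=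
  Matrix.of fun i j => if i = σ j then 1 else 0

/-- The all-ones vector. -/
def u (g : ℕ) : Fin (2*g+2) → ZMod 2 := fun _ => 1

/-- The last standard basis vector. -/
def e1 (g : ℕ) : Fin (2*g+2) → ZMod 2 := fun m => if m.val = 2*g+1 then 1 else 0

/-- The symplectic representation of the symmetric group `S_{2g+2}`. -/
def M (g : ℕ) (σ : Equiv.Perm (Fin (2*g+2))) :
    Matrix (Fin g ⊕ Fin g) (Fin g ⊕ Fin g) (ZMod 2) :=
  J (Fin g) (ZMod 2) * (al g)ᵀ * P g σ * al g

/-- `J` squared is one in characteristic two. -/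
lemma J2 (g : ℕ) : J (Fin g) (ZMod 2) * J (Fin g) (ZMod 2) = 1 := by
  rw [Matrix.J_squared]
  ext i j
  by_cases h : i = j <;> simp [h, Matrix.one_apply] <;> decide

lemma JT (g : ℕ) : (J (Fin g) (ZMod 2))ᵀ = J (Fin g) (ZMod 2) := by
  rw [Matrix.J_transpose]
  ext i j
  simp only [Matrix.neg_apply]
  exact CharTwo.neg_eq _

/-- permutation matrices multiply contravariantly...  actually covariantly here. -/
lemma P_mul (g : ℕ) (σ τ) : P g σ * P g τ = P g (σ * τ) := by
  ext i j
  rw [Matrix.mul_apply]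
  have h : ∀ k, (P g σ) i k * (P g τ) k j
      = if k = τ j then (if i = σ k then 1 else 0) else 0 := by
    intro k; simp only [P, Matrix.of_apply]; split_ifs <;> ring
  rw [Finset.sum_congr rfl fun k _ => h k, Finset.sum_ite_eq' Finset.univ (τ j)]
  simp [P, Equiv.Perm.mul_apply]
  congr

lemma P_one (g : ℕ) : P g 1 = 1 := by
  ext i j
  simp [P, Matrix.one_apply, eq_comm]
  congr

lemma P_transpose (g : ℕ) (σ) : (P g σ)ᵀ = P g σ⁻¹ := by
  ext i j
  simp only [Matrix.transpose_apply, P, Matrix.of_apply]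
  refine if_congr ?_ rfl rfl
  constructor
  · rintro rfl; simp
  · rintro rfl; simp

lemma P_mulVec_u (g : ℕ) (σ) : P g σ *ᵥ u g = u g := by
  funext i
  rw [Matrix.mulVec]
  have h : ∀ k, (P g σ) i k * u g k = if k = σ⁻¹ i then 1 else 0 := by
    intro k
    simp only [P, u, Matrix.of_apply, mul_one]
    refine if_congr ?_ rfl rfl
    constructor
    · rintro rfl; simp
    · rintro rfl; simp
  rw [show (P g σ) i ⬝ᵥ u g = ∑ k, (P g σ) i k * u g k from rfl,
    Finset.sum_congr rfl fun k _ => h k, Finset.sum_ite_eq' Finset.univ (σ⁻¹ i)]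
  simp [u]

lemma u_vecMul_P (g : ℕ) (σ) : Matrix.vecMul (u g) (P g σ) = u g := by
  funext j
  rw [Matrix.vecMul]
  have h : ∀ k, u g k * (P g σ) k j = if k = σ j then 1 else 0 := by
    intro k; simp [P, u]
  rw [show u g ⬝ᵥ (fun k => (P g σ) k j) = ∑ k, u g k * (P g σ) k j from rfl,
    Finset.sum_congr rfl fun k _ => h k, Finset.sum_ite_eq' Finset.univ (σ j)]
  simp [u]

lemma col_sum (g : ℕ) (j) : ∑ m : Fin (2*g+2), a g j m.val = 0 := by
  cases j with
  | inl i =>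
    have hi := i.isLt
    simp only [a]
    rw [Fin.sum_univ_eq_sum_range (fun v => if v ≤ 2*i.val+1 then (1 : ZMod 2) else 0),
      Finset.sum_boole]
    have h : (Finset.range (2*g+2)).filter (fun v => v ≤ 2*i.val+1)
        = Finset.range (2*i.val+2) := by
      ext v; simp only [Finset.mem_filter, Finset.mem_range]; omega
    rw [h, Finset.card_range, show 2*i.val+2 = 2*(i.val+1) from by ring, Nat.cast_mul,
      show ((2:ℕ) : ZMod 2) = 0 from by decide, zero_mul]
  | inr i =>
    have hi := i.isLt
    simp only [a]
    rw [Fin.sum_univ_eq_sum_range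
      (fun v => if v = 2*i.val+1 ∨ v = 2*i.val+2 then (1 : ZMod 2) else 0), Finset.sum_boole]
    have h : (Finset.range (2*g+2)).filter (fun v => v = 2*i.val+1 ∨ v = 2*i.val+2)
        = {2*i.val+1, 2*i.val+2} := by
      ext v; simp only [Finset.mem_filter, Finset.mem_range, Finset.mem_insert,
        Finset.mem_singleton]; omega
    rw [h, Finset.card_insert_of_notMem (by simp), Finset.card_singleton]
    decide

lemma u_vecMul_al (g : ℕ) : Matrix.vecMul (u g) (al g) = 0 := by
  funext j
  simp only [Matrix.vecMul, dotProduct, u, one_mul, al, Matrix.of_apply, Pi.zero_apply]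
  exact col_sum g j

lemma alT_mulVec_u (g : ℕ) : (al g)ᵀ *ᵥ u g = 0 := by
  funext j
  simp only [Matrix.mulVec, dotProduct, u, mul_one, Matrix.transpose_apply, al,
    Matrix.of_apply, Pi.zero_apply]
  exact col_sum g j

lemma key (g : ℕ) (j k : Fin g ⊕ Fin g) :
    ∑ m : Fin (2*g+2), a g j m.val * a g k m.val = J (Fin g) (ZMod 2) j k := by
  cases j with
  | inl i =>
    cases k with
    | inl k =>
      have hi := i.isLt; have hk := k.isLt
      simp only [a]
      have h1 : ∀ m : Fin (2*g+2),
          (if (m:ℕ) ≤ 2*i.val+1 then (1:ZMod 2) else 0) * (if (m:ℕ) ≤ 2*k.val+1 then 1 else 0)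
          = if ((m:ℕ) ≤ 2*i.val+1 ∧ (m:ℕ) ≤ 2*k.val+1) then 1 else 0 := by
        intro m; split_ifs <;> first | ring1 | (exfalso; omega)
      rw [Finset.sum_congr rfl fun m _ => h1 m,
        Fin.sum_univ_eq_sum_range (fun v => if (v ≤ 2*i.val+1 ∧ v ≤ 2*k.val+1)
          then (1:ZMod 2) else 0), Finset.sum_boole]
      obtain ⟨t, ht, h2⟩ : ∃ t, t < g ∧ (Finset.range (2*g+2)).filter
          (fun v => v ≤ 2*i.val+1 ∧ v ≤ 2*k.val+1) = Finset.range (2*t+2) := by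
        rcases Nat.le_total i.val k.val with h | h
        · exact ⟨i.val, hi, by ext v; simp only [Finset.mem_filter, Finset.mem_range]; omega⟩
        · exact ⟨k.val, hk, by ext v; simp only [Finset.mem_filter, Finset.mem_range]; omega⟩
      rw [h2, Finset.card_range, show 2*t+2 = 2*(t+1) from by ring, Nat.cast_mul,
        show ((2:ℕ):ZMod 2) = 0 from by decide, zero_mul]
      simp [Matrix.J, Matrix.fromBlocks]
    | inr k =>
      have hi := i.isLt; have hk := k.isLt
      simp only [a]
      have h1 : ∀ m : Fin (2*g+2),
          (if (m:ℕ) ≤ 2*i.val+1 then (1:ZMod 2) else 0) *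
            (if ((m:ℕ) = 2*k.val+1 ∨ (m:ℕ) = 2*k.val+2) then 1 else 0)
          = if ((m:ℕ) = 2*k.val+1 ∧ k.val ≤ i.val) ∨ ((m:ℕ) = 2*k.val+2 ∧ k.val < i.val)
            then 1 else 0 := by
        intro m; split_ifs <;> first | ring1 | (exfalso; omega)
      rw [Finset.sum_congr rfl fun m _ => h1 m,
        Fin.sum_univ_eq_sum_range (fun v =>
          if (v = 2*k.val+1 ∧ k.val ≤ i.val) ∨ (v = 2*k.val+2 ∧ k.val < i.val)
          then (1:ZMod 2) else 0), Finset.sum_boole]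
      have hJ : J (Fin g) (ZMod 2) (Sum.inl i) (Sum.inr k) = if i = k then 1 else 0 := by
        simp only [Matrix.J, Matrix.fromBlocks_apply₁₂, Matrix.neg_apply, Matrix.one_apply]
        split_ifs <;> decide
      rw [hJ]
      rcases Nat.lt_trichotomy k.val i.val with h | h | h
      · have h2 : (Finset.range (2*g+2)).filter (fun v =>
            (v = 2*k.val+1 ∧ k.val ≤ i.val) ∨ (v = 2*k.val+2 ∧ k.val < i.val))
            = {2*k.val+1, 2*k.val+2} := by
          ext v; simp only [Finset.mem_filter, Finset.mem_range, Finset.mem_insert,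
            Finset.mem_singleton]; omega
        rw [h2, Finset.card_insert_of_notMem (by simp), Finset.card_singleton,
          if_neg (by intro hik; rw [hik] at h; omega)]
        decide
      · have h2 : (Finset.range (2*g+2)).filter (fun v =>
            (v = 2*k.val+1 ∧ k.val ≤ i.val) ∨ (v = 2*k.val+2 ∧ k.val < i.val))
            = {2*k.val+1} := by
          ext v; simp only [Finset.mem_filter, Finset.mem_range, Finset.mem_singleton]; omega
        rw [h2, Finset.card_singleton, if_pos (Fin.ext h.symm)]
        decide
      · have h2 : (Finset.range (2*g+2)).filter (fun v =>
            (v = 2*k.val+1 ∧ k.val ≤ i.val) ∨ (v = 2*k.val+2 ∧ k.val < i.val))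
            = ∅ := by
          rw [Finset.eq_empty_iff_forall_notMem]
          intro v; simp only [Finset.mem_filter, Finset.mem_range, not_and, not_or]; omega
        rw [h2, Finset.card_empty, if_neg (by intro hik; rw [hik] at h; omega)]
        decide
  | inr i =>
    cases k with
    | inl k =>
      have hi := i.isLt; have hk := k.isLt
      simp only [a]
      have h1 : ∀ m : Fin (2*g+2),
          (if ((m:ℕ) = 2*i.val+1 ∨ (m:ℕ) = 2*i.val+2) then (1:ZMod 2) else 0) *
            (if (m:ℕ) ≤ 2*k.val+1 then 1 else 0)
          = if ((m:ℕ) = 2*i.val+1 ∧ i.val ≤ k.val) ∨ ((m:ℕ) = 2*i.val+2 ∧ i.val < k.val)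
            then 1 else 0 := by
        intro m; split_ifs <;> first | ring1 | (exfalso; omega)
      rw [Finset.sum_congr rfl fun m _ => h1 m,
        Fin.sum_univ_eq_sum_range (fun v =>
          if (v = 2*i.val+1 ∧ i.val ≤ k.val) ∨ (v = 2*i.val+2 ∧ i.val < k.val)
          then (1:ZMod 2) else 0), Finset.sum_boole]
      have hJ : J (Fin g) (ZMod 2) (Sum.inr i) (Sum.inl k) = if i = k then 1 else 0 := by
        simp only [Matrix.J, Matrix.fromBlocks_apply₂₁, Matrix.one_apply]
      rw [hJ]
      rcases Nat.lt_trichotomy i.val k.val with h | h | h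
      · have h2 : (Finset.range (2*g+2)).filter (fun v =>
            (v = 2*i.val+1 ∧ i.val ≤ k.val) ∨ (v = 2*i.val+2 ∧ i.val < k.val))
            = {2*i.val+1, 2*i.val+2} := by
          ext v; simp only [Finset.mem_filter, Finset.mem_range, Finset.mem_insert,
            Finset.mem_singleton]; omega
        rw [h2, Finset.card_insert_of_notMem (by simp), Finset.card_singleton,
          if_neg (by intro hik; rw [hik] at h; omega)]
        decide
      · have h2 : (Finset.range (2*g+2)).filter (fun v =>
            (v = 2*i.val+1 ∧ i.val ≤ k.val) ∨ (v = 2*i.val+2 ∧ i.val < k.val))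
            = {2*i.val+1} := by
          ext v; simp only [Finset.mem_filter, Finset.mem_range, Finset.mem_singleton]; omega
        rw [h2, Finset.card_singleton, if_pos (Fin.ext h)]
        decide
      · have h2 : (Finset.range (2*g+2)).filter (fun v =>
            (v = 2*i.val+1 ∧ i.val ≤ k.val) ∨ (v = 2*i.val+2 ∧ i.val < k.val))
            = ∅ := by
          rw [Finset.eq_empty_iff_forall_notMem]
          intro v; simp only [Finset.mem_filter, Finset.mem_range, not_and, not_or]; omega
        rw [h2, Finset.card_empty, if_neg (by intro hik; rw [hik] at h; omega)]
        decide
    | inr k =>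
      have hi := i.isLt; have hk := k.isLt
      simp only [a]
      have h1 : ∀ m : Fin (2*g+2),
          (if ((m:ℕ) = 2*i.val+1 ∨ (m:ℕ) = 2*i.val+2) then (1:ZMod 2) else 0) *
            (if ((m:ℕ) = 2*k.val+1 ∨ (m:ℕ) = 2*k.val+2) then 1 else 0)
          = if ((m:ℕ) = 2*i.val+1 ∨ (m:ℕ) = 2*i.val+2) ∧ i.val = k.val then 1 else 0 := by
        intro m; split_ifs <;> first | ring1 | (exfalso; omega)
      rw [Finset.sum_congr rfl fun m _ => h1 m,
        Fin.sum_univ_eq_sum_range (fun v =>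
          if (v = 2*i.val+1 ∨ v = 2*i.val+2) ∧ i.val = k.val then (1:ZMod 2) else 0),
        Finset.sum_boole]
      have hJ : J (Fin g) (ZMod 2) (Sum.inr i) (Sum.inr k) = 0 := by
        simp [Matrix.J, Matrix.fromBlocks]
      rw [hJ]
      by_cases h : i.val = k.val
      · have h2 : (Finset.range (2*g+2)).filter (fun v =>
            (v = 2*i.val+1 ∨ v = 2*i.val+2) ∧ i.val = k.val)
            = {2*i.val+1, 2*i.val+2} := by
          ext v; simp only [Finset.mem_filter, Finset.mem_range, Finset.mem_insert,
            Finset.mem_singleton]; omega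
        rw [h2, Finset.card_insert_of_notMem (by simp), Finset.card_singleton]
        decide
      · have h2 : (Finset.range (2*g+2)).filter (fun v =>
            (v = 2*i.val+1 ∨ v = 2*i.val+2) ∧ i.val = k.val)
            = ∅ := by
          rw [Finset.eq_empty_iff_forall_notMem]
          intro v; simp only [Finset.mem_filter, Finset.mem_range, not_and, not_or]; omega
        rw [h2, Finset.card_empty]
        decide

lemma I1 (g : ℕ) : (al g)ᵀ * al g = J (Fin g) (ZMod 2) := by
  ext j k
  rw [Matrix.mul_apply]
  simp only [Matrix.transpose_apply, al, Matrix.of_apply]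
  exact key g j k

lemma JalT (g : ℕ) (j) (m' : Fin (2*g+2)) :
    (J (Fin g) (ZMod 2) * (al g)ᵀ) j m' = a g (j.swap) m'.val := by
  cases j with
  | inl i =>
    rw [Matrix.mul_apply, Fintype.sum_sum_type]
    have hz : ∀ k : Fin g,
        J (Fin g) (ZMod 2) (Sum.inl i) (Sum.inl k) * (al g)ᵀ (Sum.inl k) m' = 0 := by
      intro k; simp [Matrix.J, Matrix.fromBlocks]
    have hs : ∀ k : Fin g, J (Fin g) (ZMod 2) (Sum.inl i) (Sum.inr k) * (al g)ᵀ (Sum.inr k) m'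
        = if k = i then a g (Sum.inr k) m'.val else 0 := by
      intro k
      simp only [Matrix.J, Matrix.fromBlocks_apply₁₂, Matrix.neg_apply, Matrix.one_apply,
        Matrix.transpose_apply, al, Matrix.of_apply]
      split_ifs with h1 h2 h2
      · rw [neg_one_mul]; exact CharTwo.neg_eq _
      · exact absurd h1.symm h2
      · exact absurd h2.symm h1
      · rw [neg_zero, zero_mul]
    rw [Finset.sum_congr rfl fun k _ => hz k, Finset.sum_congr rfl fun k _ => hs k,
      Finset.sum_const_zero, zero_add,
      Finset.sum_ite_eq' Finset.univ i (fun k => a g (Sum.inr k) m'.val)]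
    simp [Sum.swap]
  | inr i =>
    rw [Matrix.mul_apply, Fintype.sum_sum_type]
    have hz : ∀ k : Fin g,
        J (Fin g) (ZMod 2) (Sum.inr i) (Sum.inr k) * (al g)ᵀ (Sum.inr k) m' = 0 := by
      intro k; simp [Matrix.J, Matrix.fromBlocks]
    have hs : ∀ k : Fin g, J (Fin g) (ZMod 2) (Sum.inr i) (Sum.inl k) * (al g)ᵀ (Sum.inl k) m'
        = if k = i then a g (Sum.inl k) m'.val else 0 := by
      intro k
      simp only [Matrix.J, Matrix.fromBlocks_apply₂₁, Matrix.one_apply,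
        Matrix.transpose_apply, al, Matrix.of_apply]
      split_ifs with h1 h2 h2
      · rw [one_mul]
      · exact absurd h1.symm h2
      · exact absurd h2.symm h1
      · rw [zero_mul]
    rw [Finset.sum_congr rfl fun k _ => hz k, Finset.sum_congr rfl fun k _ => hs k,
      Finset.sum_const_zero, add_zero,
      Finset.sum_ite_eq' Finset.univ i (fun k => a g (Sum.inl k) m'.val)]
    simp [Sum.swap]

lemma Ssum (g : ℕ) (m m' : ℕ) :
    ∑ i : Fin g, a g (Sum.inl i) m * a g (Sum.inr i) m'
    = if (1 ≤ m' ∧ m' ≤ 2*g) ∧ (m < m' ∨ (m = m' ∧ m' % 2 = 1)) then 1 else 0 := by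
  by_cases h : 1 ≤ m' ∧ m' ≤ 2*g
  · obtain ⟨h1, h2⟩ := h
    have hi0 : (m'-1)/2 < g := by omega
    rw [Fintype.sum_eq_single (⟨(m'-1)/2, hi0⟩ : Fin g)]
    · have hv : a g (Sum.inr ⟨(m'-1)/2, hi0⟩) m' = 1 := by
        simp only [a]; rw [if_pos]; omega
      rw [hv, mul_one]
      simp only [a]
      exact if_congr (by omega) rfl rfl
    · intro i hi
      have hival : i.val ≠ (m'-1)/2 := fun hv => hi (Fin.ext hv)
      have : a g (Sum.inr i) m' = 0 := by
        simp only [a]; rw [if_neg]; omega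
      rw [this, mul_zero]
  · rw [if_neg (by tauto)]
    apply Finset.sum_eq_zero; intro i _
    have hlt := i.isLt
    have : a g (Sum.inr i) m' = 0 := by
      simp only [a]; rw [if_neg]; omega
    rw [this, mul_zero]

lemma I2 (g : ℕ) : al g * (J (Fin g) (ZMod 2) * (al g)ᵀ)
    = 1 + vecMulVec (u g) (u g + e1 g) + vecMulVec (e1 g) (u g) := by
  ext m m'
  rw [Matrix.mul_apply]
  have hcong : ∀ j, al g m j * (J (Fin g) (ZMod 2) * (al g)ᵀ) j m'
      = a g j m.val * a g (j.swap) m'.val := by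
    intro j; rw [JalT]; rfl
  rw [Finset.sum_congr rfl fun j _ => hcong j, Fintype.sum_sum_type]
  have hswap2 : ∀ i : Fin g,
      a g (Sum.inr i) m.val * a g ((Sum.inr i : Fin g ⊕ Fin g).swap) m'.val
      = a g (Sum.inl i) m'.val * a g (Sum.inr i) m.val := by
    intro i; rw [mul_comm]; rfl
  have hswap1 : ∀ i : Fin g,
      a g (Sum.inl i) m.val * a g ((Sum.inl i : Fin g ⊕ Fin g).swap) m'.val
      = a g (Sum.inl i) m.val * a g (Sum.inr i) m'.val := by
    intro i; rfl
  rw [Finset.sum_congr rfl fun i _ => hswap1 i, Finset.sum_congr rfl fun i _ => hswap2 i,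
    Ssum g m.val m'.val, Ssum g m'.val m.val]
  have hm := m.isLt; have hm' := m'.isLt
  have hone : (1 : Matrix (Fin (2*g+2)) (Fin (2*g+2)) (ZMod 2)) m m'
      = if m.val = m'.val then 1 else 0 := by
    rw [Matrix.one_apply]; exact if_congr Fin.ext_iff rfl rfl
  simp only [Matrix.add_apply, hone, Matrix.vecMulVec_apply, Pi.add_apply, u, e1, one_mul,
    mul_one]
  split_ifs <;> first | decide | (exfalso; omega)

/- rank one helpers -/
lemma mul_vecMulVec {α β γ : Type*} [Fintype β] [DecidableEq β]
    (B : Matrix α β (ZMod 2)) (x : β → ZMod 2) (y : γ → ZMod 2) :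
    B * vecMulVec x y = vecMulVec (B *ᵥ x) y := by
  ext i j
  simp [Matrix.mul_apply, Matrix.vecMulVec_apply, Matrix.mulVec, dotProduct,
    Finset.sum_mul, mul_assoc]

lemma vecMulVec_mul {α β γ : Type*} [Fintype β] [DecidableEq β]
    (B : Matrix β γ (ZMod 2)) (x : α → ZMod 2) (y : β → ZMod 2) :
    vecMulVec x y * B = vecMulVec x (Matrix.vecMul y B) := by
  ext i j
  simp [Matrix.mul_apply, Matrix.vecMulVec_apply, Matrix.vecMul, dotProduct,
    Finset.mul_sum, mul_assoc]

lemma vecMulVec_zero_left {α β : Type*} (y : β → ZMod 2) :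
    vecMulVec (0 : α → ZMod 2) y = 0 := by
  ext i j; simp [Matrix.vecMulVec_apply]

lemma vecMulVec_zero_right {α β : Type*} (x : α → ZMod 2) :
    vecMulVec x (0 : β → ZMod 2) = 0 := by
  ext i j; simp [Matrix.vecMulVec_apply]

/-- left absorption: `alᵀ ⬝ Pσ ⬝ (u ⊗ y) = 0`. -/
lemma absorb_left {g : ℕ} {γ : Type*} (σ) (y : γ → ZMod 2) :
    (al g)ᵀ * (P g σ * vecMulVec (u g) y) = 0 := by
  rw [mul_vecMulVec, P_mulVec_u, mul_vecMulVec, alT_mulVec_u, vecMulVec_zero_left]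

/-- right absorption: `(x ⊗ u) ⬝ Pτ ⬝ al = 0`. -/
lemma absorb_right {g : ℕ} {γ : Type*} (τ) (x : γ → ZMod 2) :
    vecMulVec x (u g) * (P g τ * al g) = 0 := by
  rw [vecMulVec_mul, ← Matrix.vecMul_vecMul, u_vecMul_P, u_vecMul_al, vecMulVec_zero_right]

lemma M_mul (g : ℕ) (σ τ) : M g σ * M g τ = M g (σ * τ) := by
  have h1 : M g σ * M g τ
      = J (Fin g) (ZMod 2) * ((al g)ᵀ * (P g σ *
          ((al g * (J (Fin g) (ZMod 2) * (al g)ᵀ)) * (P g τ * al g)))) := by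
    simp only [M, Matrix.mul_assoc]
  rw [h1, I2]
  have h2 : (1 + vecMulVec (u g) (u g + e1 g) + vecMulVec (e1 g) (u g)) * (P g τ * al g)
      = P g τ * al g + vecMulVec (u g) (u g + e1 g) * (P g τ * al g) := by
    rw [Matrix.add_mul, Matrix.add_mul, Matrix.one_mul, absorb_right, add_zero]
  rw [h2, Matrix.mul_add, Matrix.mul_add, vecMulVec_mul, absorb_left, add_zero, M,
    ← Matrix.mul_assoc (P g σ) (P g τ) (al g), P_mul]
  simp only [Matrix.mul_assoc]

lemma M_one (g : ℕ) : M g 1 = 1 := by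
  rw [M, P_one, Matrix.mul_one, Matrix.mul_assoc, I1, J2]

lemma M_mem (g : ℕ) (σ) : M g σ ∈ Matrix.symplecticGroup (Fin g) (ZMod 2) := by
  rw [SymplecticGroup.mem_iff]
  have hT : (M g σ)ᵀ = (al g)ᵀ * (P g σ⁻¹ * (al g * J (Fin g) (ZMod 2))) := by
    simp only [M, Matrix.transpose_mul, Matrix.transpose_transpose, JT, P_transpose,
      Matrix.mul_assoc]
  rw [hT]
  have h1 : M g σ * J (Fin g) (ZMod 2) * ((al g)ᵀ * (P g σ⁻¹ * (al g * J (Fin g) (ZMod 2))))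
      = J (Fin g) (ZMod 2) * ((al g)ᵀ * (P g σ *
          ((al g * (J (Fin g) (ZMod 2) * (al g)ᵀ)) * (P g σ⁻¹ * (al g * J (Fin g) (ZMod 2)))))) := by
    simp only [M, Matrix.mul_assoc]
  rw [h1, I2]
  have h2 : (1 + vecMulVec (u g) (u g + e1 g) + vecMulVec (e1 g) (u g)) *
        (P g σ⁻¹ * (al g * J (Fin g) (ZMod 2)))
      = P g σ⁻¹ * (al g * J (Fin g) (ZMod 2))
        + vecMulVec (u g) (u g + e1 g) * (P g σ⁻¹ * (al g * J (Fin g) (ZMod 2))) := by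
    rw [Matrix.add_mul, Matrix.add_mul, Matrix.one_mul]
    have h3 : vecMulVec (e1 g) (u g) * (P g σ⁻¹ * (al g * J (Fin g) (ZMod 2)))
        = (vecMulVec (e1 g) (u g) * (P g σ⁻¹ * al g)) * J (Fin g) (ZMod 2) := by
      simp only [Matrix.mul_assoc]
    rw [h3, absorb_right, Matrix.zero_mul, add_zero]
  rw [h2, Matrix.mul_add, Matrix.mul_add, vecMulVec_mul, absorb_left, add_zero]
  have h3 : P g σ * (P g σ⁻¹ * (al g * J (Fin g) (ZMod 2)))
      = al g * J (Fin g) (ZMod 2) := by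
    rw [← Matrix.mul_assoc, P_mul, mul_inv_cancel, P_one, Matrix.one_mul]
  rw [h3, ← Matrix.mul_assoc ((al g)ᵀ) (al g), I1, J2, Matrix.mul_one]

section
variable {g : ℕ}

lemma zmod2_cases (y : ZMod 2) : y = 0 ∨ y = 1 := by revert y; decide

lemma ha1l {i : Fin g} {v : ℕ} (h : a g (Sum.inl i) v = 1) : v ≤ 2*i.val+1 := by
  by_contra hc
  simp only [a] at h
  rw [if_neg hc] at h
  exact absurd h (by decide)

lemma ha1r {i : Fin g} {v : ℕ} (h : a g (Sum.inr i) v = 1) :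
    v = 2*i.val+1 ∨ v = 2*i.val+2 := by
  by_contra hc
  simp only [a] at h
  rw [if_neg hc] at h
  exact absurd h (by decide)

lemma ha0r {i : Fin g} {v : ℕ} (h : a g (Sum.inr i) v = 0) :
    ¬(v = 2*i.val+1 ∨ v = 2*i.val+2) := by
  intro hc
  simp only [a] at h
  rw [if_pos hc] at h
  exact absurd h (by decide)

/-- extract a single value from a sum against a point indicator -/
lemma hsingle (f : Fin (2*g+2) → ZMod 2) (c : ℕ) (hc : c < 2*g+2) :
    (∑ m : Fin (2*g+2), f m * (if m.val = c then 1 else 0)) = f ⟨c, hc⟩ := by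
  rw [Fintype.sum_eq_single (⟨c, hc⟩ : Fin (2*g+2))]
  · rw [if_pos rfl, mul_one]
  · intro m hm
    rw [if_neg (fun hv => hm (Fin.ext hv)), mul_zero]

lemma hpair (f : Fin (2*g+2) → ZMod 2) (c d : ℕ) (hc : c < 2*g+2) (hd : d < 2*g+2)
    (hcd : c ≠ d) (h : (∑ m : Fin (2*g+2), f m * (if m.val = c ∨ m.val = d then 1 else 0)) = 0) :
    f ⟨c, hc⟩ = f ⟨d, hd⟩ := by
  have hsplit : ∀ m : Fin (2*g+2), f m * (if m.val = c ∨ m.val = d then 1 else 0)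
      = f m * (if m.val = c then 1 else 0) + f m * (if m.val = d then 1 else 0) := by
    intro m
    rcases zmod2_cases (f m) with hf | hf <;>
      · rw [hf]; split_ifs <;> first | ring1 | (exfalso; omega)
  rw [Finset.sum_congr rfl fun m _ => hsplit m, Finset.sum_add_distrib,
    hsingle f c hc, hsingle f d hd] at h
  rcases zmod2_cases (f ⟨c, hc⟩) with h1 | h1 <;> rcases zmod2_cases (f ⟨d, hd⟩) with h2 | h2 <;>
    rw [h1, h2] <;> rw [h1, h2] at h <;> first | rfl | (exact absurd h (by decide))

lemma M_inj (hg : 2 ≤ g) (σ : Equiv.Perm (Fin (2*g+2))) (h : M g σ = 1) : σ = 1 := by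
  -- Step 1: Gram equality
  have h2 : (al g)ᵀ * (P g σ * al g) = (al g)ᵀ * al g := by
    calc (al g)ᵀ * (P g σ * al g)
        = (J (Fin g) (ZMod 2) * J (Fin g) (ZMod 2)) * ((al g)ᵀ * (P g σ * al g)) := by
          rw [J2, Matrix.one_mul]
      _ = J (Fin g) (ZMod 2) * M g σ := by simp only [M, Matrix.mul_assoc]
      _ = J (Fin g) (ZMod 2) := by rw [h, Matrix.mul_one]
      _ = (al g)ᵀ * al g := (I1 g).symm
  have hPal : ∀ (m : Fin (2*g+2)) (k), (P g σ * al g) m k = a g k (σ⁻¹ m).val := by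
    intro m k
    rw [Matrix.mul_apply]
    have hterm : ∀ m', P g σ m m' * al g m' k
        = if m' = σ⁻¹ m then a g k m'.val else 0 := by
      intro m'
      simp only [P, al, Matrix.of_apply]
      by_cases hh : m' = σ⁻¹ m
      · rw [if_pos hh, if_pos (by rw [hh]; simp), one_mul]
      · rw [if_neg hh, if_neg (fun he => hh (by rw [he]; simp)), zero_mul]
    rw [Finset.sum_congr rfl fun m' _ => hterm m',
      Finset.sum_ite_eq' Finset.univ (σ⁻¹ m) (fun m' => a g k m'.val)]
    simp
  have hG : ∀ j k, (∑ m : Fin (2*g+2), a g j (σ m).val * a g k m.val)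
      = ∑ m : Fin (2*g+2), a g j m.val * a g k m.val := by
    intro j k
    have e1 : ((al g)ᵀ * (P g σ * al g)) j k = ((al g)ᵀ * al g) j k := by rw [h2]
    rw [Matrix.mul_apply, Matrix.mul_apply] at e1
    rw [show (∑ m : Fin (2*g+2), (al g)ᵀ j m * (P g σ * al g) m k)
        = ∑ m : Fin (2*g+2), (al g)ᵀ j m * a g k (σ⁻¹ m).val from
      Finset.sum_congr rfl fun m _ => by rw [hPal m k]] at e1
    simp only [Matrix.transpose_apply, al, Matrix.of_apply] at e1
    calc (∑ m : Fin (2*g+2), a g j (σ m).val * a g k m.val)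
        = ∑ m : Fin (2*g+2), a g j (σ m).val * a g k (σ⁻¹ (σ m)).val := by
          refine Finset.sum_congr rfl fun m _ => by rw [← Equiv.Perm.mul_apply, inv_mul_cancel, Equiv.Perm.one_apply]
      _ = ∑ m : Fin (2*g+2), a g j m.val * a g k (σ⁻¹ m).val :=
          Equiv.sum_comp σ (fun m => a g j m.val * a g k (σ⁻¹ m).val)
      _ = ∑ m : Fin (2*g+2), a g j m.val * a g k m.val := e1
  -- Step 2: the difference function is constant
  set x : (Fin g ⊕ Fin g) → Fin (2*g+2) → ZMod 2 :=
    fun j m => a g j (σ m).val + a g j m.val with hxdef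
  have hX : ∀ j k, (∑ m : Fin (2*g+2), x j m * a g k m.val) = 0 := by
    intro j k
    simp only [hxdef, add_mul]
    rw [Finset.sum_add_distrib, hG j k, CharTwo.add_self_eq_zero]
  have hstep : ∀ j (v : ℕ) (hv : v < 2*g),
      x j ⟨v, by omega⟩ = x j ⟨v+1, by omega⟩ := by
    intro j v hv
    rcases Nat.even_or_odd v with ⟨t, ht⟩ | ⟨t, ht⟩
    · -- v even
      rcases Nat.eq_zero_or_pos t with ht0 | ht0
      · -- v = 0 : use column inl 0
        have h0 : (0:ℕ) < g := by omega
        have hcond : ∀ m : Fin (2*g+2), a g (Sum.inl (⟨0, h0⟩ : Fin g)) m.val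
            = if m.val = v ∨ m.val = v+1 then 1 else 0 := by
          intro m; simp only [a]; exact if_congr (by omega) rfl rfl
        have hs := hX j (Sum.inl ⟨0, h0⟩)
        rw [Finset.sum_congr rfl fun m _ => by rw [hcond m]] at hs
        exact hpair (x j) v (v+1) (by omega) (by omega) (by omega) hs
      · -- v = 2t, t ≥ 1 : use columns inl t and inl (t-1)
        have htg : t < g := by omega
        have htg' : t - 1 < g := by omega
        have hcond : ∀ m : Fin (2*g+2),
            x j m * a g (Sum.inl (⟨t, htg⟩ : Fin g)) m.val
              + x j m * a g (Sum.inl (⟨t-1, htg'⟩ : Fin g)) m.val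
            = x j m * (if m.val = v ∨ m.val = v+1 then 1 else 0) := by
          intro m
          simp only [a]
          rcases zmod2_cases (x j m) with hf | hf <;>
            · rw [hf]; split_ifs <;> first | ring1 | (exfalso; omega) | decide
        have hsum : (∑ m : Fin (2*g+2), x j m * (if m.val = v ∨ m.val = v+1 then 1 else 0))
            = 0 := by
          rw [← Finset.sum_congr rfl fun m _ => hcond m, Finset.sum_add_distrib,
            hX j (Sum.inl ⟨t, htg⟩), hX j (Sum.inl ⟨t-1, htg'⟩), add_zero]
        exact hpair (x j) v (v+1) (by omega) (by omega) (by omega) hsum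
    · -- v = 2t+1 odd : use column inr t
      have htg : t < g := by omega
      have hcond : ∀ m : Fin (2*g+2), a g (Sum.inr (⟨t, htg⟩ : Fin g)) m.val
          = if m.val = v ∨ m.val = v+1 then 1 else 0 := by
        intro m; simp only [a]; exact if_congr (by omega) rfl rfl
      have hs := hX j (Sum.inr ⟨t, htg⟩)
      rw [Finset.sum_congr rfl fun m _ => by rw [hcond m]] at hs
      exact hpair (x j) v (v+1) (by omega) (by omega) (by omega) hs
  have hle : ∀ j (v : ℕ) (hv : v ≤ 2*g), x j ⟨v, by omega⟩ = x j ⟨0, by omega⟩ := by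
    intro j v
    induction v with
    | zero => intro _; rfl
    | succ w ih =>
      intro hv
      rw [← hstep j w (by omega)]
      exact ih (by omega)
  have hsum0 : ∀ j, (∑ m : Fin (2*g+2), x j m) = 0 := by
    intro j
    simp only [hxdef]
    rw [Finset.sum_add_distrib, Equiv.sum_comp σ (fun m => a g j m.val),
      CharTwo.add_self_eq_zero]
  have hconst : ∀ j (m : Fin (2*g+2)), x j m = x j ⟨0, by omega⟩ := by
    intro j m
    by_cases hm : m.val ≤ 2*g
    · have h2' := hle j m.val hm
      have hme : m = ⟨m.val, m.isLt⟩ := (Fin.eta m m.isLt).symm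
      rw [hme]
      exact h2'
    · -- m is the last index
      have hmv : m.val = 2*g+1 := by have := m.isLt; omega
      have hm' : m = ⟨2*g+1, by omega⟩ := Fin.ext hmv
      -- use the total sum
      have hsplit := hsum0 j
      have hmem : (⟨2*g+1, by omega⟩ : Fin (2*g+2)) ∈ Finset.univ := Finset.mem_univ _
      rw [← Finset.add_sum_erase Finset.univ (x j) hmem] at hsplit
      have herase : ∀ m' ∈ Finset.univ.erase (⟨2*g+1, by omega⟩ : Fin (2*g+2)),
          x j m' = x j ⟨0, by omega⟩ := by
        intro m' hm'e
        have hne := Finset.ne_of_mem_erase hm'e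
        have : m'.val ≤ 2*g := by
          have := m'.isLt
          rcases Nat.lt_or_ge m'.val (2*g+1) with hh | hh
          · omega
          · exfalso; exact hne (Fin.ext (by omega))
        have h2 := hle j m'.val this
        calc x j m' = x j ⟨m'.val, m'.isLt⟩ := by rw [Fin.eta]
          _ = x j ⟨0, by omega⟩ := h2
      rw [Finset.sum_congr rfl herase, Finset.sum_const,
        Finset.card_erase_of_mem hmem] at hsplit
      simp only [Finset.card_univ, Fintype.card_fin] at hsplit
      have hcard : 2*g+2-1 = 2*g+1 := by omega
      rw [hcard, nsmul_eq_mul] at hsplit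
      have hcast : ((2*g+1 : ℕ) : ZMod 2) = 1 := by
        rw [Nat.cast_add, Nat.cast_mul, show ((2:ℕ):ZMod 2) = 0 from by decide, zero_mul,
          zero_add, Nat.cast_one]
      rw [hcast, one_mul] at hsplit
      rw [hm']
      rcases zmod2_cases (x j ⟨2*g+1, by omega⟩) with h1 | h1 <;>
        rcases zmod2_cases (x j ⟨0, by omega⟩) with h2 | h2 <;>
          rw [h1, h2] at hsplit ⊢ <;>
            first | rfl | (exact absurd hsplit (by decide))
  -- Step 3: σ fixes 0
  have hne_val : ∀ (c d : Fin (2*g+2)), c.val ≠ d.val → (σ c).val ≠ (σ d).val := by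
    intro c d hcd hh
    exact hcd (congrArg Fin.val (σ.injective (Fin.ext hh)))
  have h0g : (0:ℕ) < g := by omega
  have hF : ∀ (c : ℕ), c < 2*g+2 → True := fun _ _ => trivial
  have hn : 4 < 2*g+2 := by omega
  -- values of x at 0
  have hc1 : x (Sum.inl ⟨0, h0g⟩) ⟨0, by omega⟩ = 0 := by
    rcases zmod2_cases (x (Sum.inl ⟨0, h0g⟩) ⟨0, by omega⟩) with hc | hc
    · exact hc
    · exfalso
      -- σ maps 2,3,4 into {0,1}
      have key : ∀ (c : ℕ) (hc2 : 2 ≤ c) (hcl : c < 2*g+2),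
          (σ ⟨c, hcl⟩).val ≤ 1 := by
        intro c hc2 hcl
        have hx := hconst (Sum.inl ⟨0, h0g⟩) ⟨c, hcl⟩
        rw [hc] at hx
        simp only [hxdef] at hx
        have hz : a g (Sum.inl (⟨0, h0g⟩ : Fin g)) ((⟨c, hcl⟩ : Fin (2*g+2)) : ℕ) = 0 := by
          simp only [a]; rw [if_neg (by omega)]
        rw [hz, add_zero] at hx
        have hle1 := ha1l hx
        have hv0 : ((⟨0, h0g⟩ : Fin g) : ℕ) = 0 := rfl
        rw [hv0] at hle1
        omega
      have p2 : (2:ℕ) < 2*g+2 := by omega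
      have p3 : (3:ℕ) < 2*g+2 := by omega
      have p4 : (4:ℕ) < 2*g+2 := by omega
      have k2 := key 2 (by omega) p2
      have k3 := key 3 (by omega) p3
      have k4 := key 4 (by omega) p4
      have d23 := hne_val ⟨2, p2⟩ ⟨3, p3⟩ (show (2:ℕ) ≠ 3 by omega)
      have d24 := hne_val ⟨2, p2⟩ ⟨4, p4⟩ (show (2:ℕ) ≠ 4 by omega)
      have d34 := hne_val ⟨3, p3⟩ ⟨4, p4⟩ (show (3:ℕ) ≠ 4 by omega)
      omega
  have hc2 : x (Sum.inr ⟨0, h0g⟩) ⟨0, by omega⟩ = 0 := by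
    rcases zmod2_cases (x (Sum.inr ⟨0, h0g⟩) ⟨0, by omega⟩) with hc | hc
    · exact hc
    · exfalso
      have key : ∀ (c : ℕ) (hc2 : c = 0 ∨ c = 3 ∨ c = 4) (hcl : c < 2*g+2),
          (σ ⟨c, hcl⟩).val = 1 ∨ (σ ⟨c, hcl⟩).val = 2 := by
        intro c hc2 hcl
        have hx := hconst (Sum.inr ⟨0, h0g⟩) ⟨c, hcl⟩
        rw [hc] at hx
        simp only [hxdef] at hx
        have hz : a g (Sum.inr (⟨0, h0g⟩ : Fin g)) ((⟨c, hcl⟩ : Fin (2*g+2)) : ℕ) = 0 := by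
          simp only [a]; rw [if_neg (by omega)]
        rw [hz, add_zero] at hx
        have hor := ha1r hx
        have hv0 : ((⟨0, h0g⟩ : Fin g) : ℕ) = 0 := rfl
        rw [hv0] at hor
        omega
      have p0 : (0:ℕ) < 2*g+2 := by omega
      have p3 : (3:ℕ) < 2*g+2 := by omega
      have p4 : (4:ℕ) < 2*g+2 := by omega
      have k0 := key 0 (by omega) p0
      have k3 := key 3 (by omega) p3
      have k4 := key 4 (by omega) p4
      have d03 := hne_val ⟨0, p0⟩ ⟨3, p3⟩ (show (0:ℕ) ≠ 3 by omega)
      have d04 := hne_val ⟨0, p0⟩ ⟨4, p4⟩ (show (0:ℕ) ≠ 4 by omega)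
      have d34 := hne_val ⟨3, p3⟩ ⟨4, p4⟩ (show (3:ℕ) ≠ 4 by omega)
      omega
  have hfix0 : σ ⟨0, by omega⟩ = (⟨0, by omega⟩ : Fin (2*g+2)) := by
    simp only [hxdef, Fin.val_mk] at hc1 hc2
    have ha1 : a g (Sum.inl (⟨0, h0g⟩ : Fin g)) (0:ℕ) = 1 := by
      simp only [a]; rw [if_pos (by omega)]
    have ha2 : a g (Sum.inr (⟨0, h0g⟩ : Fin g)) (0:ℕ) = 0 := by
      simp only [a]; rw [if_neg (by omega)]
    rw [ha1] at hc1
    rw [ha2, add_zero] at hc2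
    have e1' : a g (Sum.inl (⟨0, h0g⟩ : Fin g)) ((σ ⟨0, by omega⟩).val) = 1 := by
      rcases zmod2_cases (a g (Sum.inl (⟨0, h0g⟩ : Fin g)) ((σ ⟨0, by omega⟩).val)) with hz | hz
      · rw [hz] at hc1; exact absurd hc1 (by decide)
      · exact hz
    have b1 := ha1l e1'
    have b2 := ha0r hc2
    have hv0 : ((⟨0, h0g⟩ : Fin g) : ℕ) = 0 := rfl
    rw [hv0] at b1 b2
    exact Fin.ext (show (σ ⟨0, by omega⟩).val = (0:ℕ) by omega)
  have hx0 : ∀ j, x j ⟨0, by omega⟩ = 0 := by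
    intro j
    simp only [hxdef]
    rw [hfix0]
    exact CharTwo.add_self_eq_zero _
  have hA : ∀ j (m : Fin (2*g+2)), a g j (σ m).val = a g j m.val := by
    intro j m
    have hx := hconst j m
    rw [hx0 j] at hx
    simp only [hxdef] at hx
    rcases zmod2_cases (a g j (σ m).val) with h1 | h1 <;>
      rcases zmod2_cases (a g j m.val) with h2 | h2 <;>
        rw [h1, h2] <;> rw [h1, h2] at hx <;> first | rfl | (exact absurd hx (by decide))
  have hfix : ∀ (v : ℕ) (hv : v < 2*g+2), σ ⟨v, hv⟩ = ⟨v, hv⟩ := by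
    intro v
    induction v using Nat.strong_induction_on with
    | _ v ih =>
      intro hv
      have hb : (σ ⟨v, hv⟩).val ≤ v := by
        rcases Nat.eq_zero_or_pos v with h0 | h0
        · subst h0
          have hb0 : (σ ⟨0, hv⟩).val = (0:ℕ) := congrArg Fin.val hfix0
          omega
        · rcases Nat.even_or_odd v with ⟨t, ht⟩ | ⟨t, ht⟩
          · have htg : t - 1 < g := by omega
            have hav : a g (Sum.inr (⟨t-1, htg⟩ : Fin g)) v = 1 := by
              simp only [a]; rw [if_pos (by omega)]
            have h5 : a g (Sum.inr (⟨t-1, htg⟩ : Fin g)) ((σ ⟨v, hv⟩).val) = 1 :=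
              (hA (Sum.inr ⟨t-1, htg⟩) ⟨v, hv⟩).trans hav
            have hor := ha1r h5
            have hvt : ((⟨t-1, htg⟩ : Fin g) : ℕ) = t-1 := rfl
            rw [hvt] at hor
            omega
          · rcases Nat.lt_or_ge v (2*g+1) with hvs | hvs
            · have htg : t < g := by omega
              have hav : a g (Sum.inl (⟨t, htg⟩ : Fin g)) v = 1 := by
                simp only [a]; rw [if_pos (by omega)]
              have h5 : a g (Sum.inl (⟨t, htg⟩ : Fin g)) ((σ ⟨v, hv⟩).val) = 1 :=
                (hA (Sum.inl ⟨t, htg⟩) ⟨v, hv⟩).trans hav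
              have hor := ha1l h5
              have hvt : ((⟨t, htg⟩ : Fin g) : ℕ) = t := rfl
              rw [hvt] at hor
              omega
            · have := (σ ⟨v, hv⟩).isLt; omega
      rcases Nat.lt_or_ge (σ ⟨v, hv⟩).val v with hlt | hge
      · exfalso
        have hkfix := ih (σ ⟨v, hv⟩).val hlt ((σ ⟨v, hv⟩).isLt)
        have heq : σ ⟨v, hv⟩ = σ ⟨(σ ⟨v, hv⟩).val, (σ ⟨v, hv⟩).isLt⟩ := by
          rw [hkfix]
        have := congrArg Fin.val (σ.injective heq)
        simp only [Fin.val_mk] at this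
        omega
      · exact Fin.ext (show (σ ⟨v, hv⟩).val = v by omega)
  apply Equiv.ext
  intro m
  have := hfix m.val m.isLt
  simpa using this

end

/-- The embedding of the symmetric group into the symplectic group. -/
def Phi (g : ℕ) : Equiv.Perm (Fin (2*g+2)) →* (Matrix.symplecticGroup (Fin g) (ZMod 2)) where
  toFun σ := ⟨M g σ, M_mem g σ⟩
  map_one' := Subtype.ext (M_one g)
  map_mul' σ τ := Subtype.ext (M_mul g σ τ).symm

theorem main (g : ℕ) (hg : 2 ≤ g) :
    (2 * g + 2).factorial ∣ Nat.card (Matrix.symplecticGroup (Fin g) (ZMod 2)) := by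
  have hinj : Function.Injective (Phi g) := by
    rw [injective_iff_map_eq_one]
    intro σ hσ
    exact M_inj hg σ (congrArg Subtype.val hσ)
  have h1 : Nat.card (Equiv.Perm (Fin (2*g+2))) = (2*g+2).factorial := by
    rw [Nat.card_eq_fintype_card, Fintype.card_perm, Fintype.card_fin]
  have h2 : Nat.card (Equiv.Perm (Fin (2*g+2))) = Nat.card (Phi g).range :=
    Nat.card_congr (MonoidHom.ofInjective hinj).toEquiv
  rw [← h1, h2]
  exact Subgroup.card_subgroup_dvd_card (Phi g).range

end Stmt10

/-- `(2g+2)!` divides the order of the symplectic group `Sp(2g, F₂)`: the number of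
connected components `|Sp(2g, F₂)|/(2g+2)!` of the moduli space of hyperelliptic curves
of genus `g` with level 2 structure is a positive integer. -/
theorem stmt10 (g : ℕ) (hg : 2 ≤ g) :
    (2 * g + 2).factorial ∣ Nat.card (Matrix.symplecticGroup (Fin g) (ZMod 2)) := by
  exact Stmt10.main g hg
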